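/- Let $\Omega \subset \mathbb{R}^N$ be a bounded domain, $2 < q < 2N/(N-2)_+$, $\lambda_q = (q-1)/(q-2)$, and $J(w) = \frac{1}{2}\int_\Omega |\nabla w|^2 dx - \frac{\lambda_q}{q}\int_\Omega |w|^q dx$ for $w \in H^1_0(\Omega)$. Let $\phi \in H^1_0(\Omega)$ be a weak solution of $-\Delta\phi = \lambda_q|\phi|^{q-2}\phi$ with zero Dirichlet data, and let $\mathcal{L}_\phi = -\Delta - \lambda_q(q-1)|\phi|^{q-2} : H^1_0(\Omega) \to H^{-1}(\Omega)$. Then for $2 < q < 3$ and any $u \in H^1_0(\Omega)$: $\left| J(u) - J(\phi) - \frac{1}{2}\langle \mathcal{L}_\phi(u-\phi), u - \phi\rangle \right| \le \frac{\lambda_q(q-1)}{2} \|u - \phi\|_{L^q(\Omega)}^{q}$. -/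

import Mathlib

open MeasureTheory
open scoped RealInnerProductSpace Topology

private lemma real_rpow_add_le {p x y : ℝ} (hx : 0 ≤ x) (hy : 0 ≤ y)
    (hp : 0 ≤ p) (hp1 : p ≤ 1) : (x + y) ^ p ≤ x ^ p + y ^ p := by
  have h := NNReal.rpow_add_le_add_rpow x.toNNReal y.toNNReal hp hp1
  have hxy : ((x.toNNReal + y.toNNReal : NNReal) : ℝ) = x + y := by
    simp [Real.coe_toNNReal _ hx, Real.coe_toNNReal _ hy]
  have h2 := (NNReal.coe_le_coe).2 h
  rw [NNReal.coe_add, NNReal.coe_rpow, NNReal.coe_rpow, NNReal.coe_rpow, hxy,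
    Real.coe_toNNReal _ hx, Real.coe_toNNReal _ hy] at h2
  exact h2

private lemma abs_rpow_sub_rpow_le {p x y : ℝ} (hx : 0 ≤ x) (hy : 0 ≤ y)
    (hp : 0 < p) (hp1 : p ≤ 1) : |x ^ p - y ^ p| ≤ |x - y| ^ p := by
  have key : ∀ a b : ℝ, 0 ≤ a → 0 ≤ b → b ≤ a → a ^ p - b ^ p ≤ |a - b| ^ p := by
    intro a b ha hb hba
    have h1 : a ^ p ≤ b ^ p + (a - b) ^ p := by
      have := real_rpow_add_le hb (by linarith : (0:ℝ) ≤ a - b) hp.le hp1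
      rwa [add_sub_cancel] at this
    have : |a - b| = a - b := abs_of_nonneg (by linarith)
    rw [this]; linarith
  rcases le_total y x with h | h
  · rw [abs_of_nonneg (by have := Real.rpow_le_rpow hy h hp.le; linarith)]
    exact key x y hx hy h
  · rw [abs_of_nonpos (by have := Real.rpow_le_rpow hx h hp.le; linarith), ← abs_neg, neg_sub]
    have := key y x hy hx h
    rwa [neg_sub]

private lemma hasDerivAt_abs_rpow_mul_self {s : ℝ} (hs : 0 < s) (x : ℝ) :
    HasDerivAt (fun y : ℝ => |y| ^ s * y) ((s + 1) * |x| ^ s) x := by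
  rcases lt_trichotomy x 0 with hx | rfl | hx
  · have h2 : HasDerivAt (fun y : ℝ => -y) (-1 : ℝ) x := (hasDerivAt_id x).neg
    have h3 := (Real.hasDerivAt_rpow_const (x := -x) (p := s + 1)
      (Or.inl (by intro h; nlinarith [neg_pos.2 hx] : (-x : ℝ) ≠ 0))).comp x h2
    have h4 : HasDerivAt (fun y : ℝ => -((-y) ^ (s + 1))) ((s + 1) * |x| ^ s) x := by
      refine h3.neg.congr_deriv ?_
      rw [abs_of_neg hx, show s + 1 - 1 = s by ring]
      ring
    refine h4.congr_of_eventuallyEq ?_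
    filter_upwards [eventually_lt_nhds hx] with y hy
    rw [abs_of_neg hy, Real.rpow_add_one (by intro h; nlinarith [neg_pos.2 hy] : (-y : ℝ) ≠ 0)]
    ring
  · rw [hasDerivAt_iff_tendsto_slope]
    have hval : (s + 1) * |(0:ℝ)| ^ s = 0 := by
      simp [Real.zero_rpow hs.ne']
    rw [hval]
    have htend : Filter.Tendsto (fun y : ℝ => |y| ^ s) (𝓝 0) (𝓝 0) := by
      have hc : ContinuousAt (fun t : ℝ => t ^ s) 0 :=
        Real.continuousAt_rpow_const 0 s (Or.inr hs.le)
      have := hc.tendsto.comp (continuous_abs.tendsto' 0 0 abs_zero)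
      simpa [Real.zero_rpow hs.ne', Function.comp_def] using this
    refine Filter.Tendsto.congr' ?_ (htend.mono_left nhdsWithin_le_nhds)
    filter_upwards [self_mem_nhdsWithin] with y hy
    have hy' : y ≠ 0 := hy
    simp [slope_def_field]
    field_simp
  · have h3 := Real.hasDerivAt_rpow_const (x := x) (p := s + 1) (Or.inl hx.ne')
    have h4 : HasDerivAt (fun y : ℝ => y ^ (s + 1)) ((s + 1) * |x| ^ s) x := by
      convert h3 using 1
      rw [abs_of_pos hx]
      ring_nf
    refine h4.congr_of_eventuallyEq ?_
    filter_upwards [eventually_gt_nhds hx] with y hy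
    rw [abs_of_pos hy, ← Real.rpow_add_one hy.ne']

private lemma abs_rpow_mul_self_mul_self {s : ℝ} (hs : 0 < s) (y : ℝ) :
    |y| ^ s * y * y = |y| ^ (s + 2) := by
  rcases eq_or_ne y 0 with rfl | hy
  · simp [Real.zero_rpow hs.ne', Real.zero_rpow (by positivity : s + 2 ≠ 0)]
  · have h2 : |y| ^ ((2:ℕ):ℝ) = |y| * |y| := by
      rw [Real.rpow_natCast]; ring
    rw [mul_assoc, ← abs_mul_abs_self y, Real.rpow_add (abs_pos.2 hy)]
    push_cast at h2
    rw [h2]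

private lemma stmt12_hasDerivAt_abs_rpow {q : ℝ} (hq : 2 < q) (x : ℝ) :
    HasDerivAt (fun y : ℝ => |y| ^ q) (q * |x| ^ (q - 2) * x) x := by
  have h := (hasDerivAt_abs_rpow_mul_self (s := q - 2) (by linarith) x).mul (hasDerivAt_id x)
  simp only [id_eq] at h
  have heq : (fun y : ℝ => |y| ^ (q - 2) * y * y) = fun y : ℝ => |y| ^ q := by
    funext y
    rw [abs_rpow_mul_self_mul_self (by linarith : (0:ℝ) < q - 2)]
    norm_num
  rw [show ((fun y : ℝ => |y| ^ (q - 2) * y) * id) = fun y : ℝ => |y| ^ (q - 2) * y * y from rfl, heq] at h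
  refine h.congr_deriv ?_
  ring

private lemma stmt12_f_taylor {q : ℝ} (hq1 : 2 < q) (hq3 : q < 3) (a c : ℝ) :
    abs (|c| ^ (q - 2) * c - |a| ^ (q - 2) * a - (q - 1) * |a| ^ (q - 2) * (c - a))
      ≤ (q - 1) * |c - a| ^ (q - 2) * |c - a| := by
  have hs0 : (0:ℝ) < q - 2 := by linarith
  have hs1 : q - 2 ≤ 1 := by linarith
  set g : ℝ → ℝ := fun x => |x| ^ (q - 2) * x - (q - 2 + 1) * |a| ^ (q - 2) * x with hg
  have hgd : ∀ x : ℝ, HasDerivAt g ((q - 2 + 1) * (|x| ^ (q - 2) - |a| ^ (q - 2))) x := by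
    intro x
    have h1 := (hasDerivAt_abs_rpow_mul_self hs0 x).sub
      ((hasDerivAt_id x).const_mul ((q - 2 + 1) * |a| ^ (q - 2)))
    refine h1.congr_deriv ?_
    ring
  have hsub : ∀ x ∈ Set.uIcc a c,
      ‖(q - 2 + 1) * (|x| ^ (q - 2) - |a| ^ (q - 2))‖ ≤ (q - 1) * |c - a| ^ (q - 2) := by
    intro x hx
    have hxa : |x - a| ≤ |c - a| := by
      rcases Set.mem_uIcc.1 hx with ⟨h1, h2⟩ | ⟨h1, h2⟩ <;>
      · rw [abs_le]
        constructor <;> nlinarith [le_abs_self (c - a), neg_abs_le (c - a)]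
    have h1 : abs (|x| ^ (q - 2) - |a| ^ (q - 2)) ≤ abs (|x| - |a|) ^ (q - 2) :=
      abs_rpow_sub_rpow_le (abs_nonneg x) (abs_nonneg a) hs0 hs1
    have h2 : abs (|x| - |a|) ^ (q - 2) ≤ |x - a| ^ (q - 2) :=
      Real.rpow_le_rpow (abs_nonneg _) (abs_abs_sub_abs_le_abs_sub x a) hs0.le
    have h3 : |x - a| ^ (q - 2) ≤ |c - a| ^ (q - 2) :=
      Real.rpow_le_rpow (abs_nonneg _) hxa hs0.le
    rw [Real.norm_eq_abs, abs_mul, abs_of_pos (by linarith : (0:ℝ) < q - 2 + 1)]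
    have hq21 : q - 2 + 1 = q - 1 := by ring
    rw [hq21]
    have := abs_nonneg (|x| ^ (q - 2) - |a| ^ (q - 2))
    nlinarith [h1.trans (h2.trans h3)]
  have key := Convex.norm_image_sub_le_of_norm_hasDerivWithin_le
    (f := g) (f' := fun x => (q - 2 + 1) * (|x| ^ (q - 2) - |a| ^ (q - 2)))
    (fun x _ => (hgd x).hasDerivWithinAt) hsub (convex_uIcc a c)
    Set.left_mem_uIcc Set.right_mem_uIcc
  rw [Real.norm_eq_abs, Real.norm_eq_abs] at key
  have hexp : g c - g a = |c| ^ (q - 2) * c - |a| ^ (q - 2) * a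
      - (q - 1) * |a| ^ (q - 2) * (c - a) := by
    simp only [hg]; ring
  rw [hexp] at key
  exact key

private lemma stmt12_pointwise {q : ℝ} (hq1 : 2 < q) (hq3 : q < 3) (a b : ℝ) :
    abs (|a + b| ^ q - |a| ^ q - q * (|a| ^ (q - 2) * a * b)
        - q * (q - 1) / 2 * (|a| ^ (q - 2) * b ^ 2))
      ≤ q * (q - 1) / 2 * |b| ^ q := by
  have hq0 : (0:ℝ) < q := by linarith
  have hbq : |b| ^ (q - 2) * |b| * |b| = |b| ^ q := by
    have h := abs_rpow_mul_self_mul_self (show (0:ℝ) < q - 2 by linarith) |b|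
    rw [abs_abs, show q - 2 + 2 = q from by ring] at h
    exact h
  have hEd : ∀ t : ℝ, HasDerivAt
      (fun t : ℝ => |a + t * b| ^ q - |a| ^ q - q * (|a| ^ (q - 2) * a * b) * t
        - q * (q - 1) / 2 * (|a| ^ (q - 2) * b ^ 2) * t ^ 2)
      (q * |a + t * b| ^ (q - 2) * (a + t * b) * b
        - q * (|a| ^ (q - 2) * a * b) - q * (q - 1) * (|a| ^ (q - 2) * b ^ 2) * t) t := by
    intro t
    have h1 : HasDerivAt (fun t : ℝ => a + t * b) b t := by
      simpa using ((hasDerivAt_id t).mul_const b).const_add a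
    have h2 := (stmt12_hasDerivAt_abs_rpow hq1 (a + t * b)).comp t h1
    have h3 : HasDerivAt (fun t : ℝ => q * (|a| ^ (q - 2) * a * b) * t)
        (q * (|a| ^ (q - 2) * a * b)) t := by
      simpa using (hasDerivAt_id t).const_mul (q * (|a| ^ (q - 2) * a * b))
    have h4 : HasDerivAt (fun t : ℝ => q * (q - 1) / 2 * (|a| ^ (q - 2) * b ^ 2) * t ^ 2)
        (q * (q - 1) * (|a| ^ (q - 2) * b ^ 2) * t) t := by
      have h5 := (hasDerivAt_pow 2 t).const_mul (q * (q - 1) / 2 * (|a| ^ (q - 2) * b ^ 2))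
      refine h5.congr_deriv ?_
      norm_num
      ring
    have h6 := ((h2.sub_const (|a| ^ q)).sub h3).sub h4
    exact h6
  have hbound : ∀ t ∈ Set.Icc (0:ℝ) 1,
      abs (q * |a + t * b| ^ (q - 2) * (a + t * b) * b
        - q * (|a| ^ (q - 2) * a * b) - q * (q - 1) * (|a| ^ (q - 2) * b ^ 2) * t)
      ≤ q * (q - 1) * |b| ^ q * t := by
    intro t ht
    have h := stmt12_f_taylor hq1 hq3 a (a + t * b)
    rw [show a + t * b - a = t * b from by ring] at h
    have heq : q * |a + t * b| ^ (q - 2) * (a + t * b) * b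
        - q * (|a| ^ (q - 2) * a * b) - q * (q - 1) * (|a| ^ (q - 2) * b ^ 2) * t
      = q * b * (|a + t * b| ^ (q - 2) * (a + t * b) - |a| ^ (q - 2) * a
        - (q - 1) * |a| ^ (q - 2) * (t * b)) := by ring
    rw [heq, abs_mul, abs_mul, abs_of_pos hq0]
    have hmono : |t * b| ^ (q - 2) ≤ |b| ^ (q - 2) := by
      apply Real.rpow_le_rpow (abs_nonneg _) _ (by linarith)
      rw [abs_mul, abs_of_nonneg ht.1]
      nlinarith [abs_nonneg b, ht.2, ht.1]
    have habs : |t * b| = t * |b| := by rw [abs_mul, abs_of_nonneg ht.1]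
    calc q * |b| * abs (|a + t * b| ^ (q - 2) * (a + t * b) - |a| ^ (q - 2) * a
            - (q - 1) * |a| ^ (q - 2) * (t * b))
        ≤ q * |b| * ((q - 1) * |t * b| ^ (q - 2) * |t * b|) := by
          apply mul_le_mul_of_nonneg_left h (by positivity)
      _ ≤ q * |b| * ((q - 1) * |b| ^ (q - 2) * |t * b|) := by
          apply mul_le_mul_of_nonneg_left _ (by positivity)
          apply mul_le_mul_of_nonneg_right _ (abs_nonneg _)
          exact mul_le_mul_of_nonneg_left hmono (by linarith)
      _ = q * (q - 1) * (|b| ^ (q - 2) * |b| * |b|) * t := by rw [habs]; ring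
      _ = q * (q - 1) * |b| ^ q * t := by rw [hbq]
  have hM : 0 ≤ q * (q - 1) / 2 * |b| ^ q := by
    apply mul_nonneg (by nlinarith) (Real.rpow_nonneg (abs_nonneg b) q)
  -- upper bound
  have hupper : ∀ (σ : ℝ), σ = 1 ∨ σ = -1 →
      σ * (|a + b| ^ q - |a| ^ q - q * (|a| ^ (q - 2) * a * b)
        - q * (q - 1) / 2 * (|a| ^ (q - 2) * b ^ 2)) ≤ q * (q - 1) / 2 * |b| ^ q := by
    intro σ hσ
    have hσ2 : σ * σ = 1 := by rcases hσ with rfl | rfl <;> norm_num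
    have hσabs : |σ| = 1 := by rcases hσ with rfl | rfl <;> norm_num
    set P : ℝ → ℝ := fun t => σ * (|a + t * b| ^ q - |a| ^ q - q * (|a| ^ (q - 2) * a * b) * t
        - q * (q - 1) / 2 * (|a| ^ (q - 2) * b ^ 2) * t ^ 2)
        - q * (q - 1) / 2 * |b| ^ q * t ^ 2 with hP
    have hPd : ∀ t : ℝ, HasDerivAt P
        (σ * (q * |a + t * b| ^ (q - 2) * (a + t * b) * b
          - q * (|a| ^ (q - 2) * a * b) - q * (q - 1) * (|a| ^ (q - 2) * b ^ 2) * t)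
          - q * (q - 1) * |b| ^ q * t) t := by
      intro t
      have h5 := ((hEd t).const_mul σ).sub
        ((hasDerivAt_pow 2 t).const_mul (q * (q - 1) / 2 * |b| ^ q))
      refine h5.congr_deriv ?_
      norm_num
      ring
    have hant : AntitoneOn P (Set.Icc (0:ℝ) 1) := by
      apply antitoneOn_of_deriv_nonpos (convex_Icc 0 1)
      · exact fun t _ => (hPd t).continuousAt.continuousWithinAt
      · intro t ht
        rw [interior_Icc] at ht
        exact (hPd t).differentiableAt.differentiableWithinAt
      · intro t ht
        rw [interior_Icc] at ht
        rw [(hPd t).deriv]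
        have hb := hbound t ⟨ht.1.le, ht.2.le⟩
        have h7 : σ * (q * |a + t * b| ^ (q - 2) * (a + t * b) * b
            - q * (|a| ^ (q - 2) * a * b) - q * (q - 1) * (|a| ^ (q - 2) * b ^ 2) * t)
            ≤ q * (q - 1) * |b| ^ q * t := by
          have := abs_le.1 hb
          rcases hσ with rfl | rfl
          · linarith [this.2]
          · linarith [this.1]
        linarith
    have h10 := hant (Set.left_mem_Icc.2 zero_le_one) (Set.right_mem_Icc.2 zero_le_one)
      zero_le_one
    have hP0 : P 0 = 0 := by
      simp [hP]
    have hP1 : P 1 = σ * (|a + b| ^ q - |a| ^ q - q * (|a| ^ (q - 2) * a * b)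
        - q * (q - 1) / 2 * (|a| ^ (q - 2) * b ^ 2)) - q * (q - 1) / 2 * |b| ^ q := by
      simp [hP]
    rw [hP0, hP1] at h10
    linarith
  rw [abs_le]
  constructor
  · have := hupper (-1) (Or.inr rfl)
    linarith
  · have := hupper 1 (Or.inl rfl)
    linarith

private lemma stmt12_rpow_mul_self_self {q : ℝ} (hq1 : 2 < q) {a : ℝ} (ha : 0 ≤ a) :
    a ^ (q - 2) * a * a = a ^ q := by
  have h := abs_rpow_mul_self_mul_self (show (0:ℝ) < q - 2 by linarith) a
  rw [abs_of_nonneg ha, show q - 2 + 2 = q from by ring] at h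
  exact h

private lemma stmt12_mul_le {q : ℝ} (hq1 : 2 < q) {a b : ℝ} (ha : 0 ≤ a) (hb : 0 ≤ b) :
    a ^ (q - 2) * a * b ≤ a ^ q + b ^ q := by
  rcases le_total b a with hba | hab
  · have h2 : a ^ (q - 2) * a * b ≤ a ^ (q - 2) * a * a :=
      mul_le_mul_of_nonneg_left hba (mul_nonneg (Real.rpow_nonneg ha _) ha)
    rw [stmt12_rpow_mul_self_self hq1 ha] at h2
    have := Real.rpow_nonneg hb q
    linarith
  · have h1 : a ^ (q - 2) ≤ b ^ (q - 2) := Real.rpow_le_rpow ha hab (by linarith)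
    have h2 : a ^ (q - 2) * a ≤ b ^ (q - 2) * b :=
      mul_le_mul h1 hab ha (Real.rpow_nonneg hb _)
    have h3 : a ^ (q - 2) * a * b ≤ b ^ (q - 2) * b * b :=
      mul_le_mul_of_nonneg_right h2 hb
    rw [stmt12_rpow_mul_self_self hq1 hb] at h3
    have := Real.rpow_nonneg ha q
    linarith

private lemma stmt12_sq_le {q : ℝ} (hq1 : 2 < q) {a b : ℝ} (ha : 0 ≤ a) (hb : 0 ≤ b) :
    a ^ (q - 2) * (b * b) ≤ a ^ q + b ^ q := by
  rcases le_total a b with hab | hba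
  · have h1 : a ^ (q - 2) ≤ b ^ (q - 2) := Real.rpow_le_rpow ha hab (by linarith)
    have h2 : a ^ (q - 2) * (b * b) ≤ b ^ (q - 2) * (b * b) :=
      mul_le_mul_of_nonneg_right h1 (mul_nonneg hb hb)
    rw [show b ^ (q - 2) * (b * b) = b ^ q from by
      rw [← mul_assoc]; exact stmt12_rpow_mul_self_self hq1 hb] at h2
    have := Real.rpow_nonneg ha q
    linarith
  · have h2 : a ^ (q - 2) * (b * b) ≤ a ^ (q - 2) * (a * a) := by
      apply mul_le_mul_of_nonneg_left _ (Real.rpow_nonneg ha _)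
      exact mul_le_mul hba hba hb ha
    rw [show a ^ (q - 2) * (a * a) = a ^ q from by
      rw [← mul_assoc]; exact stmt12_rpow_mul_self_self hq1 ha] at h2
    have := Real.rpow_nonneg hb q
    linarith

/-- **Taylor expansion of the energy.** With `Ω`, `2 < q < 3 (< 2*)`,
`λ_q = (q-1)/(q-2)`, `H ≅ H¹₀(Ω)` (realized by `T`, so that `‖w‖² = ∫ |∇w|²`), the
energy `J(w) = ½‖w‖² - (λ_q/q) ∫ |w|^q` and a weak solution `φ` of
`-Δ φ = λ_q |φ|^(q-2) φ` (hypothesis `hφ`), one has for every `u ∈ H¹₀(Ω)`: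
`|J(u) - J(φ) - ½⟨𝓛_φ(u-φ), u-φ⟩| ≤ (λ_q (q-1)/2) ‖u-φ‖_{L^q}^q`, where
`⟨𝓛_φ z, z⟩ = ‖z‖² - λ_q (q-1) ∫ |φ|^(q-2) z²`. -/
theorem stmt_12 {N : ℕ} (Ω : Set (EuclideanSpace ℝ (Fin N)))
    (hΩopen : IsOpen Ω) (hΩconn : IsConnected Ω) (hΩbdd : Bornology.IsBounded Ω)
    (q : ℝ) (hq1 : 2 < q) (hq3 : q < 3) (hq2 : (N : ℝ) ≤ 2 ∨ q < 2 * N / (N - 2))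
    {H : Type*} [NormedAddCommGroup H] [InnerProductSpace ℝ H] [CompleteSpace H]
    (T : H →ₗ[ℝ] (EuclideanSpace ℝ (Fin N) → ℝ))
    (hTmeas : ∀ u : H, Measurable (T u))
    (hTLq : ∀ u : H, MemLp (T u) (ENNReal.ofReal q) (volume.restrict Ω))
    (φ u : H)
    (hφ : ∀ z : H, ⟪φ, z⟫ =
      (q - 1) / (q - 2) * ∫ x in Ω, |T φ x| ^ (q - 2) * T φ x * T z x) :
    |(1 / 2 * ‖u‖ ^ 2 - (q - 1) / (q - 2) / q * ∫ x in Ω, |T u x| ^ q)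
        - (1 / 2 * ‖φ‖ ^ 2 - (q - 1) / (q - 2) / q * ∫ x in Ω, |T φ x| ^ q)
        - 1 / 2 * (‖u - φ‖ ^ 2
            - (q - 1) / (q - 2) * (q - 1)
              * ∫ x in Ω, |T φ x| ^ (q - 2) * (T (u - φ) x) ^ 2)|
      ≤ (q - 1) / (q - 2) * (q - 1) / 2 * ∫ x in Ω, |T u x - T φ x| ^ q := by
  have hq0 : (0:ℝ) < q := by linarith
  simp only [map_sub, Pi.sub_apply]
  have hlam : (0:ℝ) < (q - 1) / (q - 2) := div_pos (by linarith) (by linarith)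
  set μ := MeasureTheory.volume.restrict Ω with hμ
  -- integrability of |T w|^q
  have hInt : ∀ w : H, Integrable (fun x => |T w x| ^ q) μ := by
    intro w
    have h := (hTLq w).integrable_norm_rpow
      (by simp [ENNReal.ofReal_eq_zero]; linarith) ENNReal.ofReal_ne_top
    simpa [Real.norm_eq_abs, ENNReal.toReal_ofReal hq0.le] using h
  have hBmem : MemLp (fun x => T u x - T φ x) (ENNReal.ofReal q) μ := by
    have h := (hTLq u).sub (hTLq φ)
    exact h
  have hBq : Integrable (fun x => |T u x - T φ x| ^ q) μ := by
    have h := hBmem.integrable_norm_rpow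
      (by simp [ENNReal.ofReal_eq_zero]; linarith) ENNReal.ofReal_ne_top
    simpa [Real.norm_eq_abs, ENNReal.toReal_ofReal hq0.le] using h
  have hmeasrpow : Measurable (fun x => |T φ x| ^ (q - 2)) :=
    (((Real.continuous_rpow_const (by linarith : (0:ℝ) ≤ q - 2)).comp
      continuous_abs).measurable).comp (hTmeas φ)
  have i1 : Integrable (fun x => |T φ x| ^ (q - 2) * T φ x * (T u x - T φ x)) μ := by
    refine ((hInt φ).add hBq).mono' ?_ (Filter.Eventually.of_forall fun x => ?_)
    · exact ((hmeasrpow.mul (hTmeas φ)).mul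
        ((hTmeas u).sub (hTmeas φ))).aestronglyMeasurable
    · rw [Real.norm_eq_abs, abs_mul, abs_mul,
        abs_of_nonneg (Real.rpow_nonneg (abs_nonneg _) _)]
      exact stmt12_mul_le hq1 (abs_nonneg _) (abs_nonneg _)
  have i2 : Integrable (fun x => |T φ x| ^ (q - 2) * (T u x - T φ x) ^ 2) μ := by
    refine ((hInt φ).add hBq).mono' ?_ (Filter.Eventually.of_forall fun x => ?_)
    · exact (hmeasrpow.mul (((hTmeas u).sub (hTmeas φ)).pow measurable_const
        )).aestronglyMeasurable
    · rw [Real.norm_eq_abs, abs_mul, abs_of_nonneg (Real.rpow_nonneg (abs_nonneg _) _),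
        abs_pow, pow_two]
      exact stmt12_sq_le hq1 (abs_nonneg _) (abs_nonneg _)
  have hsplit : (∫ x in Ω, (|T φ x| ^ (q - 2) * T φ x * (T u x - T φ x)
        + (q - 1) / 2 * (|T φ x| ^ (q - 2) * (T u x - T φ x) ^ 2)
        - 1 / q * (|T u x| ^ q - |T φ x| ^ q)))
      = (∫ x in Ω, |T φ x| ^ (q - 2) * T φ x * (T u x - T φ x))
        + (q - 1) / 2 * (∫ x in Ω, |T φ x| ^ (q - 2) * (T u x - T φ x) ^ 2)
        - 1 / q * ((∫ x in Ω, |T u x| ^ q) - ∫ x in Ω, |T φ x| ^ q) := by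
    have i4 : Integrable (fun x => (q - 1) / 2 * (|T φ x| ^ (q - 2) * (T u x - T φ x) ^ 2)) μ := by
      exact i2.const_mul ((q - 1) / 2)
    have i12 : Integrable (fun x => |T φ x| ^ (q - 2) * T φ x * (T u x - T φ x)
        + (q - 1) / 2 * (|T φ x| ^ (q - 2) * (T u x - T φ x) ^ 2)) μ := by
      exact i1.add i4
    have isub : Integrable (fun x => |T u x| ^ q - |T φ x| ^ q) μ := by
      exact (hInt u).sub (hInt φ)
    have i5 : Integrable (fun x => 1 / q * (|T u x| ^ q - |T φ x| ^ q)) μ := by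
      exact isub.const_mul (1 / q)
    rw [integral_sub i12 i5, integral_add i1 i4,
      integral_const_mul, integral_const_mul, integral_sub (hInt u) (hInt φ)]
  have hnorm : ‖u‖ ^ 2 = ‖φ‖ ^ 2 + 2 * ⟪φ, u - φ⟫ + ‖u - φ‖ ^ 2 := by
    have h := norm_add_sq_real φ (u - φ)
    rw [show φ + (u - φ) = u from by abel] at h
    exact h
  have hφz : ⟪φ, u - φ⟫ = (q - 1) / (q - 2)
      * ∫ x in Ω, |T φ x| ^ (q - 2) * T φ x * (T u x - T φ x) := by
    have h := hφ (u - φ)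
    simpa [map_sub, Pi.sub_apply] using h
  have hEQ : (1 / 2 * ‖u‖ ^ 2 - (q - 1) / (q - 2) / q * ∫ x in Ω, |T u x| ^ q)
        - (1 / 2 * ‖φ‖ ^ 2 - (q - 1) / (q - 2) / q * ∫ x in Ω, |T φ x| ^ q)
        - 1 / 2 * (‖u - φ‖ ^ 2 - (q - 1) / (q - 2) * (q - 1)
            * ∫ x in Ω, |T φ x| ^ (q - 2) * (T u x - T φ x) ^ 2)
      = (q - 1) / (q - 2) * ∫ x in Ω, (|T φ x| ^ (q - 2) * T φ x * (T u x - T φ x)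
        + (q - 1) / 2 * (|T φ x| ^ (q - 2) * (T u x - T φ x) ^ 2)
        - 1 / q * (|T u x| ^ q - |T φ x| ^ q)) := by
    rw [hsplit, hnorm, hφz]
    ring
  rw [hEQ, abs_mul, abs_of_pos hlam]
  have hGbound : ∀ x, abs (|T φ x| ^ (q - 2) * T φ x * (T u x - T φ x)
        + (q - 1) / 2 * (|T φ x| ^ (q - 2) * (T u x - T φ x) ^ 2)
        - 1 / q * (|T u x| ^ q - |T φ x| ^ q))
      ≤ (q - 1) / 2 * |T u x - T φ x| ^ q := by
    intro x
    have h := stmt12_pointwise hq1 hq3 (T φ x) (T u x - T φ x)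
    rw [show T φ x + (T u x - T φ x) = T u x from by ring] at h
    have h2 : q * (|T φ x| ^ (q - 2) * T φ x * (T u x - T φ x)
        + (q - 1) / 2 * (|T φ x| ^ (q - 2) * (T u x - T φ x) ^ 2)
        - 1 / q * (|T u x| ^ q - |T φ x| ^ q))
      = -(|T u x| ^ q - |T φ x| ^ q
        - q * (|T φ x| ^ (q - 2) * T φ x * (T u x - T φ x))
        - q * (q - 1) / 2 * (|T φ x| ^ (q - 2) * (T u x - T φ x) ^ 2)) := by
      field_simp
      ring
    have h3 := abs_mul q (|T φ x| ^ (q - 2) * T φ x * (T u x - T φ x)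
        + (q - 1) / 2 * (|T φ x| ^ (q - 2) * (T u x - T φ x) ^ 2)
        - 1 / q * (|T u x| ^ q - |T φ x| ^ q))
    rw [h2, abs_neg, abs_of_pos hq0] at h3
    have h4 : q * abs (|T φ x| ^ (q - 2) * T φ x * (T u x - T φ x)
        + (q - 1) / 2 * (|T φ x| ^ (q - 2) * (T u x - T φ x) ^ 2)
        - 1 / q * (|T u x| ^ q - |T φ x| ^ q))
        ≤ q * ((q - 1) / 2 * |T u x - T φ x| ^ q) := by
      rw [← h3]
      calc abs (|T u x| ^ q - |T φ x| ^ q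
          - q * (|T φ x| ^ (q - 2) * T φ x * (T u x - T φ x))
          - q * (q - 1) / 2 * (|T φ x| ^ (q - 2) * (T u x - T φ x) ^ 2))
          ≤ q * (q - 1) / 2 * |T u x - T φ x| ^ q := h
        _ = q * ((q - 1) / 2 * |T u x - T φ x| ^ q) := by ring
    exact le_of_mul_le_mul_left h4 hq0
  have hG : Integrable (fun x => |T φ x| ^ (q - 2) * T φ x * (T u x - T φ x)
      + (q - 1) / 2 * (|T φ x| ^ (q - 2) * (T u x - T φ x) ^ 2)
      - 1 / q * (|T u x| ^ q - |T φ x| ^ q)) μ :=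
    (i1.add (i2.const_mul ((q - 1) / 2))).sub (((hInt u).sub (hInt φ)).const_mul (1 / q))
  have hmono : |∫ x in Ω, (|T φ x| ^ (q - 2) * T φ x * (T u x - T φ x)
        + (q - 1) / 2 * (|T φ x| ^ (q - 2) * (T u x - T φ x) ^ 2)
        - 1 / q * (|T u x| ^ q - |T φ x| ^ q))|
      ≤ (q - 1) / 2 * ∫ x in Ω, |T u x - T φ x| ^ q := by
    have h9 := norm_integral_le_integral_norm (μ := μ)
      (fun x => |T φ x| ^ (q - 2) * T φ x * (T u x - T φ x)
        + (q - 1) / 2 * (|T φ x| ^ (q - 2) * (T u x - T φ x) ^ 2)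
        - 1 / q * (|T u x| ^ q - |T φ x| ^ q))
    have h10 : (∫ x, ‖|T φ x| ^ (q - 2) * T φ x * (T u x - T φ x)
        + (q - 1) / 2 * (|T φ x| ^ (q - 2) * (T u x - T φ x) ^ 2)
        - 1 / q * (|T u x| ^ q - |T φ x| ^ q)‖ ∂μ)
        ≤ ∫ x, (q - 1) / 2 * |T u x - T φ x| ^ q ∂μ := by
      apply integral_mono hG.norm (hBq.const_mul ((q - 1) / 2))
      intro x
      simp only [Real.norm_eq_abs]
      exact hGbound x
    rw [integral_const_mul] at h10
    exact h9.trans h10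
  calc (q - 1) / (q - 2) * |∫ x in Ω, (|T φ x| ^ (q - 2) * T φ x * (T u x - T φ x)
        + (q - 1) / 2 * (|T φ x| ^ (q - 2) * (T u x - T φ x) ^ 2)
        - 1 / q * (|T u x| ^ q - |T φ x| ^ q))|
      ≤ (q - 1) / (q - 2) * ((q - 1) / 2 * ∫ x in Ω, |T u x - T φ x| ^ q) :=
        mul_le_mul_of_nonneg_left hmono hlam.le
    _ = (q - 1) / (q - 2) * (q - 1) / 2 * ∫ x in Ω, |T u x - T φ x| ^ q := by ring
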